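/- For every E0 > 0 and every C > 0 there exists γ0 > 0 such that for all γ ∈ (0, γ0) and all μ ∈ (0, Cγ], the transition system (A)–(B) has at most one solution (q, ν) with ν > 0 and −1 < q ≤ 0. -/

import Mathlib

open Filter

/-- The unique positive root of `ε² + (E0+4)ε - γ² = 0`. -/
noncomputable def epsPar (E0 γ : ℝ) : ℝ :=
  (-(E0 + 4) + Real.sqrt ((E0 + 4)^2 + 4 * γ^2)) / 2

/-- `E1 = E0 + ε`. -/
noncomputable def E1Par (E0 γ : ℝ) : ℝ := E0 + epsPar E0 γ

/-- `a = 4 + E0 + ε`. -/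
noncomputable def aPar (E0 γ : ℝ) : ℝ := 4 + E0 + epsPar E0 γ

/-- Equation (A) of the transition system:
`(1-q)(1+q) = 12γ⁴ / (ν² (ν+E1) (ν+a+ε)²)`. -/
def EqA (E0 γ q ν : ℝ) : Prop :=
  (1 - q) * (1 + q) =
    12 * γ^4 / (ν^2 * (ν + E1Par E0 γ) * (ν + aPar E0 γ + epsPar E0 γ)^2)

/-- Equation (B) of the transition system:
`(2+q)²/(1+q) = (9/2)(μ/γ²)(ν+a)²(ν+E1)/(ν(ν+a+ε))`. -/
def EqB (E0 γ μ q ν : ℝ) : Prop :=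
  (2 + q)^2 / (1 + q) =
    (9/2) * (μ / γ^2) * ((ν + aPar E0 γ)^2 * (ν + E1Par E0 γ)) /
      (ν * (ν + aPar E0 γ + epsPar E0 γ))




private lemma polyineq (x b a e : ℝ) (hx : 0 < x) (hb : 0 < b) (ha : 4 ≤ a)
    (he : 0 < e) (he4 : e ≤ 1/4) :
    3*(x+a)*(2*(x+b)*(x+a+e) + x*(x+a+e) + 2*x*(x+b))
      ≤ 4*(x+b)*(3*(x+a+e)*(x+a) + 3*x*(x+a) - 2*x*(x+a+e)) := by
  have key : 4*(x+b)*(3*(x+a+e)*(x+a) + 3*x*(x+a) - 2*x*(x+a+e))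
      - 3*(x+a)*(2*(x+b)*(x+a+e) + x*(x+a+e) + 2*x*(x+b))
      = x^3 + (4*a+4*b-5*e)*x^2 + (3*a^2+10*a*b+3*a*e-2*b*e)*x + (6*a^2*b+6*a*b*e) := by
    ring
  have c2 : 0 ≤ 4*a+4*b-5*e := by linarith
  have c1 : 0 ≤ 3*a^2+10*a*b+3*a*e-2*b*e := by nlinarith [mul_nonneg hb.le (show (0:ℝ) ≤ 5*a - e by linarith), mul_pos (show (0:ℝ) < a by linarith) (show (0:ℝ) < a by linarith), mul_pos (show (0:ℝ) < a by linarith) he]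
  have c0 : 0 ≤ 6*a^2*b+6*a*b*e := by nlinarith [mul_pos (mul_pos (show (0:ℝ) < a by linarith) (show (0:ℝ) < a by linarith)) hb, mul_pos (mul_pos (show (0:ℝ) < a by linarith) hb) he]
  nlinarith [mul_pos hx (mul_pos hx hx), mul_nonneg c2 (mul_pos hx hx).le, mul_nonneg c1 hx.le]

private lemma num_pos (u M P R : ℝ) (hu0 : 0 < u) (hu1 : u < 1) (hM : 0 < M) (hP : 0 < P)
    (haux : 3*R ≤ 4*M*P) :
    0 < 2*(2-u)^2*(1+u)*M*P^2 - 3*(2-u)*((1-u^2)*P)*R := by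
  have h2u : 0 < 2 - u := by linarith
  have h1u : 0 < 1 + u := by linarith
  have h1 : 0 ≤ ((2-u)*(1+u)*P)*((1-u)*(4*M*P-3*R)) := by
    apply mul_nonneg (mul_nonneg (mul_nonneg h2u.le h1u.le) hP.le)
    apply mul_nonneg (by linarith) (by linarith)
  have h2 : 0 < ((2-u)*(1+u)*P)*(2*u*(M*P)) := by
    apply mul_pos (mul_pos (mul_pos h2u h1u) hP)
    exact mul_pos (by linarith) (mul_pos hM hP)
  nlinarith [h1, h2]

private lemma d_pos_abstract (u c Q P N M S : ℝ) (hu0 : 0 < u) (hu1 : u < 1)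
    (hP : 0 < P) (hS : 0 < S) (hM : 0 < M) (hc : c = (1-u^2)*P)
    (haux : 3*(Q*N*S) ≤ 4*M*P) :
    0 < (-(3*u)*(2-u)*(c*Q/(P^2*(2*u))))*(N/S) + (2-u)^2*(1+u)*(M/S^2) := by
  have heq : (-(3*u)*(2-u)*(c*Q/(P^2*(2*u))))*(N/S) + (2-u)^2*(1+u)*(M/S^2)
      = (2*(2-u)^2*(1+u)*M*P^2 - 3*(2-u)*((1-u^2)*P)*(Q*N*S)) / (2*P^2*S^2) := by
    rw [hc]; field_simp; ring
  rw [heq]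
  exact div_pos (num_pos u M P (Q*N*S) hu0 hu1 hM hP haux)
    (by positivity)

noncomputable def Phif (γ b a e ν : ℝ) : ℝ :=
  (2 - Real.sqrt (1 - 12*γ^4/(ν^2*(ν+b)*(ν+a+e)^2)))^2
    * (1 + Real.sqrt (1 - 12*γ^4/(ν^2*(ν+b)*(ν+a+e)^2)))
    * (ν^3*(ν+a+e)^3/(ν+a)^2)

set_option maxHeartbeats 1000000 in
private lemma deriv_parts (γ b a e x : ℝ) (hγ : 0 < γ) (hb : 0 < b) (ha : 4 ≤ a)
    (he : 0 < e) (he4 : e ≤ 1/4) (hx : 0 < x)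
    (hF1 : 12*γ^4/(x^2*(x+b)*(x+a+e)^2) < 1) :
    ∃ d, 0 < d ∧ HasDerivAt (Phif γ b a e) d x := by
  have hp1 : 0 < x + b := by linarith
  have hp2 : 0 < x + a + e := by linarith
  have hp3 : 0 < x + a := by linarith
  have hP : 0 < x^2*(x+b)*(x+a+e)^2 := by positivity
  have hFpos : 0 < 12*γ^4/(x^2*(x+b)*(x+a+e)^2) := by positivity
  have hE0 : 0 < 1 - 12*γ^4/(x^2*(x+b)*(x+a+e)^2) := by linarith
  have hE1 : 1 - 12*γ^4/(x^2*(x+b)*(x+a+e)^2) < 1 := by linarith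
  have hu0 : 0 < Real.sqrt (1 - 12*γ^4/(x^2*(x+b)*(x+a+e)^2)) := Real.sqrt_pos.mpr hE0
  have hu2 : (Real.sqrt (1 - 12*γ^4/(x^2*(x+b)*(x+a+e)^2)))^2
      = 1 - 12*γ^4/(x^2*(x+b)*(x+a+e)^2) := Real.sq_sqrt hE0.le
  have hu1 : Real.sqrt (1 - 12*γ^4/(x^2*(x+b)*(x+a+e)^2)) < 1 := by
    nlinarith [hu2, hu0]
  -- derivative of the denominator polynomial
  have hid : HasDerivAt (fun ν : ℝ => ν) 1 x := hasDerivAt_id x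
  have hdD : HasDerivAt (fun ν : ℝ => ν^2*(ν+b)*(ν+a+e)^2)
      (2*x*(x+b)*(x+a+e)^2 + x^2*(x+a+e)^2 + 2*x^2*(x+b)*(x+a+e)) x := by
    have h1 : HasDerivAt (fun ν : ℝ => ν^2) (2*x) x := by
      simpa using hasDerivAt_pow 2 x
    have h2 : HasDerivAt (fun ν : ℝ => ν + b) 1 x := hid.add_const b
    have h3 : HasDerivAt (fun ν : ℝ => (ν+a+e)^2) (2*(x+a+e)) x := by
      have := ((hid.add_const a).add_const e).pow 2
      norm_num at this
      exact this.congr_deriv (by norm_num <;> ring)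
    have := (h1.mul h2).mul h3
    exact this.congr_deriv (by norm_num <;> ring)
  -- derivative of F
  have hdF : HasDerivAt (fun ν : ℝ => 12*γ^4/(ν^2*(ν+b)*(ν+a+e)^2))
      (-(12*γ^4*(2*x*(x+b)*(x+a+e)^2 + x^2*(x+a+e)^2 + 2*x^2*(x+b)*(x+a+e)))/(x^2*(x+b)*(x+a+e)^2)^2) x := by
    have := (hasDerivAt_const x (12*γ^4)).div hdD (ne_of_gt hP)
    exact this.congr_deriv (by norm_num <;> ring)
  -- derivative of sqrt(1 - F)
  have hdU : HasDerivAt (fun ν : ℝ => Real.sqrt (1 - 12*γ^4/(ν^2*(ν+b)*(ν+a+e)^2)))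
      (12*γ^4*(2*x*(x+b)*(x+a+e)^2 + x^2*(x+a+e)^2 + 2*x^2*(x+b)*(x+a+e))
        /((x^2*(x+b)*(x+a+e)^2)^2*(2*Real.sqrt (1 - 12*γ^4/(x^2*(x+b)*(x+a+e)^2))))) x := by
    have := ((hasDerivAt_const x (1:ℝ)).sub hdF).sqrt (ne_of_gt hE0)
    refine this.congr_deriv ?_
    simp only [Pi.sub_apply]
    field_simp
    ring
  -- derivative of the u-part
  have hdA : HasDerivAt (fun ν : ℝ =>
      (2 - Real.sqrt (1 - 12*γ^4/(ν^2*(ν+b)*(ν+a+e)^2)))^2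
        * (1 + Real.sqrt (1 - 12*γ^4/(ν^2*(ν+b)*(ν+a+e)^2))))
      (-(3*Real.sqrt (1 - 12*γ^4/(x^2*(x+b)*(x+a+e)^2)))
        *(2 - Real.sqrt (1 - 12*γ^4/(x^2*(x+b)*(x+a+e)^2)))
        *(12*γ^4*(2*x*(x+b)*(x+a+e)^2 + x^2*(x+a+e)^2 + 2*x^2*(x+b)*(x+a+e))
          /((x^2*(x+b)*(x+a+e)^2)^2*(2*Real.sqrt (1 - 12*γ^4/(x^2*(x+b)*(x+a+e)^2)))))) x := by
    have h2u := (hasDerivAt_const x (2:ℝ)).sub hdU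
    have h1u := (hasDerivAt_const x (1:ℝ)).add hdU
    have := (h2u.pow 2).mul h1u
    refine this.congr_deriv ?_
    simp only [Pi.sub_apply, Pi.add_apply, Pi.pow_apply]
    push_cast
    ring
  -- derivative of g
  have hdg : HasDerivAt (fun ν : ℝ => ν^3*(ν+a+e)^3/(ν+a)^2)
      ((3*x^2*(x+a+e)^3*(x+a)^2 + 3*x^3*(x+a+e)^2*(x+a)^2 - 2*x^3*(x+a+e)^3*(x+a))
        /((x+a)^2)^2) x := by
    have h1 : HasDerivAt (fun ν : ℝ => ν^3) (3*x^2) x := by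
      simpa using hasDerivAt_pow 3 x
    have h2 : HasDerivAt (fun ν : ℝ => (ν+a+e)^3) (3*(x+a+e)^2) x := by
      have := ((hid.add_const a).add_const e).pow 3
      norm_num at this
      exact this.congr_deriv (by norm_num <;> ring)
    have h3 : HasDerivAt (fun ν : ℝ => (ν+a)^2) (2*(x+a)) x := by
      have := (hid.add_const a).pow 2
      norm_num at this
      exact this.congr_deriv (by norm_num <;> ring)
    have := (h1.mul h2).div h3 (by positivity)
    exact this.congr_deriv (by norm_num <;> ring)
  have hΦ := hdA.mul hdg
  refine ⟨_, ?_, hΦ⟩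
  have hS : 0 < (x+a)^2 := by positivity
  have hM : 0 < 3*x^2*(x+a+e)^3*(x+a)^2 + 3*x^3*(x+a+e)^2*(x+a)^2 - 2*x^3*(x+a+e)^3*(x+a) := by
    have hfac : 3*x^2*(x+a+e)^3*(x+a)^2 + 3*x^3*(x+a+e)^2*(x+a)^2 - 2*x^3*(x+a+e)^3*(x+a)
        = x^2*(x+a+e)^2*(x+a)*(3*(x+a+e)*(x+a) + 3*x*(x+a) - 2*x*(x+a+e)) := by ring
    rw [hfac]
    apply mul_pos (by positivity)
    nlinarith [mul_pos hp2 (show (0:ℝ) < 3*(x+a)-2*x by linarith), mul_pos hx hp3]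
  have hc : 12*γ^4 = (1-(Real.sqrt (1 - 12*γ^4/(x^2*(x+b)*(x+a+e)^2)))^2)*(x^2*(x+b)*(x+a+e)^2) := by
    rw [hu2]
    field_simp
    ring
  have haux : 3*((2*x*(x+b)*(x+a+e)^2 + x^2*(x+a+e)^2 + 2*x^2*(x+b)*(x+a+e))
        *(x^3*(x+a+e)^3)*((x+a)^2))
      ≤ 4*(3*x^2*(x+a+e)^3*(x+a)^2 + 3*x^3*(x+a+e)^2*(x+a)^2 - 2*x^3*(x+a+e)^3*(x+a))
        *(x^2*(x+b)*(x+a+e)^2) := by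
    have hfact : 4*(3*x^2*(x+a+e)^3*(x+a)^2 + 3*x^3*(x+a+e)^2*(x+a)^2 - 2*x^3*(x+a+e)^3*(x+a))
          *(x^2*(x+b)*(x+a+e)^2)
        - 3*((2*x*(x+b)*(x+a+e)^2 + x^2*(x+a+e)^2 + 2*x^2*(x+b)*(x+a+e))
          *(x^3*(x+a+e)^3)*((x+a)^2))
        = (x^4*(x+a+e)^4*(x+a)) * (4*(x+b)*(3*(x+a+e)*(x+a) + 3*x*(x+a) - 2*x*(x+a+e))
          - 3*(x+a)*(2*(x+b)*(x+a+e) + x*(x+a+e) + 2*x*(x+b))) := by ring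
    have hpi := polyineq x b a e hx hb ha he he4
    nlinarith [hfact, mul_nonneg (show (0:ℝ) ≤ x^4*(x+a+e)^4*(x+a) by positivity)
      (show (0:ℝ) ≤ 4*(x+b)*(3*(x+a+e)*(x+a) + 3*x*(x+a) - 2*x*(x+a+e))
          - 3*(x+a)*(2*(x+b)*(x+a+e) + x*(x+a+e) + 2*x*(x+b)) by linarith)]
  show 0 < (-(3*Real.sqrt (1 - 12*γ^4/(x^2*(x+b)*(x+a+e)^2)))
      *(2 - Real.sqrt (1 - 12*γ^4/(x^2*(x+b)*(x+a+e)^2)))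
      *(12*γ^4*(2*x*(x+b)*(x+a+e)^2 + x^2*(x+a+e)^2 + 2*x^2*(x+b)*(x+a+e))
        /((x^2*(x+b)*(x+a+e)^2)^2*(2*Real.sqrt (1 - 12*γ^4/(x^2*(x+b)*(x+a+e)^2))))))
      *(x^3*(x+a+e)^3/(x+a)^2)
    + (2 - Real.sqrt (1 - 12*γ^4/(x^2*(x+b)*(x+a+e)^2)))^2
      *(1 + Real.sqrt (1 - 12*γ^4/(x^2*(x+b)*(x+a+e)^2)))
      *((3*x^2*(x+a+e)^3*(x+a)^2 + 3*x^3*(x+a+e)^2*(x+a)^2 - 2*x^3*(x+a+e)^3*(x+a))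
        /((x+a)^2)^2)
  exact d_pos_abstract (Real.sqrt (1 - 12*γ^4/(x^2*(x+b)*(x+a+e)^2))) (12*γ^4)
    (2*x*(x+b)*(x+a+e)^2 + x^2*(x+a+e)^2 + 2*x^2*(x+b)*(x+a+e))
    (x^2*(x+b)*(x+a+e)^2) (x^3*(x+a+e)^3)
    (3*x^2*(x+a+e)^3*(x+a)^2 + 3*x^3*(x+a+e)^2*(x+a)^2 - 2*x^3*(x+a+e)^3*(x+a))
    ((x+a)^2) hu0 hu1 hP hS hM hc haux
private lemma phi_mono (γ b a e ν₀ : ℝ) (hγ : 0 < γ) (hb : 0 < b) (ha : 4 ≤ a)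
    (he : 0 < e) (he4 : e ≤ 1/4) (hν₀ : 0 < ν₀)
    (hF₀ : 12*γ^4/(ν₀^2*(ν₀+b)*(ν₀+a+e)^2) ≤ 1) :
    StrictMonoOn (Phif γ b a e) (Set.Ici ν₀) := by
  have hden : ∀ y ∈ Set.Ici ν₀, y^2*(y+b)*(y+a+e)^2 ≠ 0 := by
    intro y hy
    have hy0 : 0 < y := lt_of_lt_of_le hν₀ hy
    have h1 : 0 < y + b := by linarith
    have h2 : 0 < y + a + e := by linarith
    positivity
  have hcont : ContinuousOn (Phif γ b a e) (Set.Ici ν₀) := by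
    have hFc : ContinuousOn (fun ν : ℝ => 12*γ^4/(ν^2*(ν+b)*(ν+a+e)^2)) (Set.Ici ν₀) :=
      ContinuousOn.div continuousOn_const (by fun_prop) hden
    have hUc : ContinuousOn
        (fun ν : ℝ => Real.sqrt (1 - 12*γ^4/(ν^2*(ν+b)*(ν+a+e)^2))) (Set.Ici ν₀) :=
      Real.continuous_sqrt.comp_continuousOn (continuousOn_const.sub hFc)
    have hgc : ContinuousOn (fun ν : ℝ => ν^3*(ν+a+e)^3/(ν+a)^2) (Set.Ici ν₀) := by
      apply ContinuousOn.div (by fun_prop) (by fun_prop)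
      intro y hy
      have hy0 : 0 < y := lt_of_lt_of_le hν₀ hy
      have : 0 < y + a := by linarith
      positivity
    exact (((continuousOn_const.sub hUc).pow 2).mul (continuousOn_const.add hUc)).mul hgc
  apply strictMonoOn_of_deriv_pos (convex_Ici ν₀) hcont
  intro x hx
  rw [interior_Ici] at hx
  have hxν₀ : ν₀ < x := hx
  have hx0 : 0 < x := lt_trans hν₀ hxν₀
  have hDlt : ν₀^2*(ν₀+b)*(ν₀+a+e)^2 < x^2*(x+b)*(x+a+e)^2 := by
    have h1 : ν₀^2 < x^2 := by nlinarith
    have h2 : ν₀ + b < x + b := by linarith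
    have h3 : (ν₀+a+e)^2 < (x+a+e)^2 := by nlinarith
    have e1 : ν₀^2*(ν₀+b) < x^2*(x+b) :=
      mul_lt_mul'' h1 h2 (by positivity) (by positivity)
    exact mul_lt_mul'' e1 h3 (by positivity) (by positivity)
  have hF1 : 12*γ^4/(x^2*(x+b)*(x+a+e)^2) < 1 := by
    have hD0 : 0 < ν₀^2*(ν₀+b)*(ν₀+a+e)^2 := by
      have h1 : 0 < ν₀ + b := by linarith
      have h2 : 0 < ν₀ + a + e := by linarith
      positivity
    calc 12*γ^4/(x^2*(x+b)*(x+a+e)^2) < 12*γ^4/(ν₀^2*(ν₀+b)*(ν₀+a+e)^2) :=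
          div_lt_div_of_pos_left (by positivity) hD0 hDlt
      _ ≤ 1 := hF₀
  obtain ⟨d, hd0, hd⟩ := deriv_parts γ b a e x hγ hb ha he he4 hx0 hF1
  rw [hd.deriv]
  exact hd0

private lemma phi_val (γ b a e μ q ν : ℝ) (hγ : 0 < γ) (hb : 0 < b) (ha : 4 ≤ a)
    (he : 0 < e) (hν : 0 < ν) (hq1 : -1 < q) (hq0 : q ≤ 0)
    (hA : (1 - q) * (1 + q) = 12 * γ^4 / (ν^2 * (ν + b) * (ν + a + e)^2))
    (hB : (2 + q)^2 / (1 + q) = (9/2) * (μ / γ^2) * ((ν + a)^2 * (ν + b)) / (ν * (ν + a + e))) :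
    Phif γ b a e ν = 54*γ^2*μ := by
  have hp1 : 0 < ν + b := by linarith
  have hp2 : 0 < ν + a + e := by linarith
  have hp3 : 0 < ν + a := by linarith
  have hs : 0 < 1 + q := by linarith
  have hD : (0:ℝ) < ν^2*(ν+b)*(ν+a+e)^2 := by positivity
  have hU : Real.sqrt (1 - 12*γ^4/(ν^2*(ν+b)*(ν+a+e)^2)) = -q := by
    rw [show (12:ℝ)*γ^4/(ν^2*(ν+b)*(ν+a+e)^2)
        = 12 * γ^4 / (ν^2 * (ν + b) * (ν + a + e)^2) from rfl, ← hA,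
      show (1:ℝ) - (1-q)*(1+q) = q^2 by ring, Real.sqrt_sq_eq_abs]
    exact abs_of_nonpos hq0
  have hA' : (1-q)*(1+q)*(ν^2*(ν+b)*(ν+a+e)^2) = 12*γ^4 := by
    rw [hA]; field_simp
  have hB2 : (2+q)^2*(ν*(ν+a+e)) = (9/2)*(μ/γ^2)*((ν+a)^2*(ν+b))*(1+q) := by
    rw [div_eq_div_iff hs.ne' (by positivity : (ν*(ν+a+e):ℝ) ≠ 0)] at hB
    exact hB
  have hB' : γ^2*((2+q)^2*(ν*(ν+a+e)))*2 = 9*μ*((ν+a)^2*(ν+b))*(1+q) := by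
    rw [hB2]
    field_simp
  have hgoal : (2+q)^2*(1-q)*(ν^3*(ν+a+e)^3) = 54*γ^2*μ*(ν+a)^2 := by
    have h2γ : (2*γ^2 : ℝ) ≠ 0 := by positivity
    apply mul_left_cancel₀ h2γ
    linear_combination ((1-q)*ν^2*(ν+a+e)^2)*hB' + (9*μ*(ν+a)^2)*hA'
  show (2 - Real.sqrt (1 - 12*γ^4/(ν^2*(ν+b)*(ν+a+e)^2)))^2
      * (1 + Real.sqrt (1 - 12*γ^4/(ν^2*(ν+b)*(ν+a+e)^2)))
      * (ν^3*(ν+a+e)^3/(ν+a)^2) = 54*γ^2*μ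
  rw [hU, show (2 - -q) = 2+q by ring, show (1 + -q) = 1-q by ring,
    ← mul_div_assoc, div_eq_iff (by positivity : ((ν+a)^2:ℝ) ≠ 0)]
  linear_combination hgoal

private lemma eps_root (E0 γ : ℝ) :
    (epsPar E0 γ)^2 + (E0+4)*(epsPar E0 γ) = γ^2 := by
  have h1 : Real.sqrt ((E0+4)^2 + 4*γ^2) ^ 2 = (E0+4)^2 + 4*γ^2 :=
    Real.sq_sqrt (by positivity)
  unfold epsPar
  linear_combination h1/4

private lemma eps_pos (E0 γ : ℝ) (hE0 : 0 < E0) (hγ : 0 < γ) : 0 < epsPar E0 γ := by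
  have h1 : Real.sqrt ((E0+4)^2 + 4*γ^2) ^ 2 = (E0+4)^2 + 4*γ^2 :=
    Real.sq_sqrt (by positivity)
  have h2 := Real.sqrt_nonneg ((E0+4)^2 + 4*γ^2)
  unfold epsPar
  nlinarith [h1, h2]

private lemma eps_small (E0 γ : ℝ) (hE0 : 0 < E0) (hγ : 0 < γ) (hγ1 : γ < 1) :
    epsPar E0 γ ≤ 1/4 := by
  have h1 := eps_root E0 γ
  have h2 := eps_pos E0 γ hE0 hγ
  nlinarith [sq_nonneg (epsPar E0 γ)]

/-- for small `γ` and `μ ≤ Cγ`, the transition system (A)-(B) has at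
most one solution `(q, ν)` with `ν > 0` and `-1 < q ≤ 0`. -/
theorem at_most_one_solution_nonpos_q
    (E0 C : ℝ) (hE0 : 0 < E0) (hC : 0 < C) :
    ∃ γ0 > 0, ∀ γ : ℝ, 0 < γ → γ < γ0 → ∀ μ : ℝ, 0 < μ → μ ≤ C * γ →
      {p : ℝ × ℝ | 0 < p.2 ∧ -1 < p.1 ∧ p.1 ≤ 0 ∧
        EqA E0 γ p.1 p.2 ∧ EqB E0 γ μ p.1 p.2}.encard ≤ 1 := by
  refine ⟨1, one_pos, ?_⟩
  intro γ hγ hγ1 μ hμ hμC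
  rw [Set.encard_le_one_iff]
  set b := E1Par E0 γ with hbdef
  set a := aPar E0 γ with hadef
  set e := epsPar E0 γ with hedef
  have he : 0 < e := eps_pos E0 γ hE0 hγ
  have he4 : e ≤ 1/4 := eps_small E0 γ hE0 hγ hγ1
  have hb : 0 < b := by rw [hbdef]; unfold E1Par; rw [← hedef]; linarith
  have ha : 4 ≤ a := by rw [hadef]; unfold aPar; rw [← hedef]; linarith
  have main : ∀ p p' : ℝ × ℝ,
      (0 < p.2 ∧ -1 < p.1 ∧ p.1 ≤ 0 ∧ EqA E0 γ p.1 p.2 ∧ EqB E0 γ μ p.1 p.2) →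
      (0 < p'.2 ∧ -1 < p'.1 ∧ p'.1 ≤ 0 ∧ EqA E0 γ p'.1 p'.2 ∧ EqB E0 γ μ p'.1 p'.2) →
      p.2 ≤ p'.2 → p = p' := by
    intro p p' hp hp' hle
    obtain ⟨hν, hq1, hq0, hA, hB⟩ := hp
    obtain ⟨hν', hq1', hq0', hA', hB'⟩ := hp'
    have hAe : (1 - p.1) * (1 + p.1)
        = 12 * γ^4 / (p.2^2 * (p.2 + b) * (p.2 + a + e)^2) := hA
    have hAe' : (1 - p'.1) * (1 + p'.1)
        = 12 * γ^4 / (p'.2^2 * (p'.2 + b) * (p'.2 + a + e)^2) := hA'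
    have hBe : (2 + p.1)^2 / (1 + p.1)
        = (9/2) * (μ / γ^2) * ((p.2 + a)^2 * (p.2 + b)) / (p.2 * (p.2 + a + e)) := hB
    have hBe' : (2 + p'.1)^2 / (1 + p'.1)
        = (9/2) * (μ / γ^2) * ((p'.2 + a)^2 * (p'.2 + b)) / (p'.2 * (p'.2 + a + e)) := hB'
    have hval : Phif γ b a e p.2 = 54*γ^2*μ :=
      phi_val γ b a e μ p.1 p.2 hγ hb ha he hν hq1 hq0 hAe hBe
    have hval' : Phif γ b a e p'.2 = 54*γ^2*μ :=
      phi_val γ b a e μ p'.1 p'.2 hγ hb ha he hν' hq1' hq0' hAe' hBe'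
    have hF0 : 12*γ^4/(p.2^2*(p.2+b)*(p.2+a+e)^2) ≤ 1 := by
      rw [show (12:ℝ)*γ^4/(p.2^2*(p.2+b)*(p.2+a+e)^2)
          = 12 * γ^4 / (p.2^2 * (p.2 + b) * (p.2 + a + e)^2) from rfl, ← hAe]
      nlinarith [sq_nonneg p.1]
    rcases eq_or_lt_of_le hle with heq2 | hlt2
    · have hqq : p.1 = p'.1 := by
        rw [← heq2] at hAe'
        have hqs : (1 - p.1) * (1 + p.1) = (1 - p'.1) * (1 + p'.1) := by
          rw [hAe, hAe']
        have h0 : (p'.1 - p.1)*(p'.1 + p.1) = 0 := by linear_combination hqs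
        rcases mul_eq_zero.mp h0 with h | h
        · linarith
        · linarith
      exact Prod.ext hqq heq2
    · exfalso
      have hmono := phi_mono γ b a e p.2 hγ hb ha he he4 hν hF0
      have := hmono (Set.self_mem_Ici) (Set.mem_Ici.mpr hle) hlt2
      rw [hval, hval'] at this
      exact lt_irrefl _ this
  intro p p' hp hp'
  rcases le_total p.2 p'.2 with h | h
  · exact main p p' hp hp' h
  · exact (main p' p hp' hp h).symm
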